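/- Let B be a small category, G = Set^B, I a finite directed multigraph without directed cycles, and D : I → G a diagram. Let ≅ be the smallest congruence on ∐_{i∈Min(I)} D_i containing all primary identifications (⊆_j(D_p(y)), ⊆_{j'}(D_{p'}(y))) for pairs of branches p = (i →^d … → j), p' = (i →^{d'} … → j') with common source i ∈ Br(I) and d ≠ d', and elements y ∈ D_i(X), X ∈ B. Then the family κ with κ_i = [−]_≅ ∘ ⊆_i for i ∈ Min(I) and κ_i = κ_j ∘ D_p for i ∉ Min(I), where p = (i → … → j) is any edge sequence from i to some j ∈ Min(I), is well-defined (independent of the choice of p) and is a colimiting cocone D ⇒ Δ((∐_{i∈Min(I)} D_i)/≅). -/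

import Mathlib

open CategoryTheory CategoryTheory.Limits

universe u

/-- A directed multigraph. -/
structure MGraph : Type (u + 1) where
  V : Type u
  E : Type u
  s : E → V
  t : E → V

/-- A diagram of shape a directed multigraph `I` in a category `C`
(a graph morphism into the underlying graph of `C`). -/
structure GDiagram (I : MGraph.{u}) (C : Type*) [Category C] where
  obj : I.V → C
  map : (e : I.E) → obj (I.s e) ⟶ obj (I.t e)

section Core

variable {I : MGraph.{u}} {C : Type*} [Category C]

/-- A natural transformation between diagrams of shape `I`. -/
@[ext]
structure GHom (F G : GDiagram I C) where
  app : (i : I.V) → F.obj i ⟶ G.obj i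
  naturality : ∀ e : I.E, F.map e ≫ app (I.t e) = app (I.s e) ≫ G.map e

/-- A transformation is cartesian if all its naturality squares are pullbacks. -/
def GHom.Cartesian {F G : GDiagram I C} (τ : GHom F G) : Prop :=
  ∀ e : I.E, IsPullback (F.map e) (τ.app (I.s e)) (τ.app (I.t e)) (G.map e)

/-- An object of the category `C^I ⇓ D` of cartesian transformations into `D`. -/
structure CartObj (D : GDiagram I C) where
  diag : GDiagram I C
  hom : GHom diag D
  cart : hom.Cartesian

instance cartObjCategory (D : GDiagram I C) : Category (CartObj D) where
  Hom A B := { φ : GHom A.diag B.diag // ∀ i, φ.app i ≫ B.hom.app i = A.hom.app i }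
  id A := ⟨⟨fun _ => 𝟙 _, fun e => by simp⟩, fun i => by simp⟩
  comp {A B C'} φ ψ :=
    ⟨⟨fun i => φ.1.app i ≫ ψ.1.app i, fun e => by
        rw [← Category.assoc, φ.1.naturality, Category.assoc, ψ.1.naturality, ← Category.assoc]⟩,
      fun i => by rw [Category.assoc, ψ.2 i, φ.2 i]⟩
  id_comp f := Subtype.ext (GHom.ext (funext fun i => Category.id_comp _))
  comp_id f := Subtype.ext (GHom.ext (funext fun i => Category.comp_id _))
  assoc f g h := Subtype.ext (GHom.ext (funext fun i => Category.assoc _ _ _))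

/-- A commutative cocone under a diagram of shape `I`. -/
structure GCocone (D : GDiagram I C) where
  pt : C
  leg : (i : I.V) → D.obj i ⟶ pt
  comm : ∀ e : I.E, D.map e ≫ leg (I.t e) = leg (I.s e)

/-- A cocone is colimiting if every cocone factors uniquely through it. -/
def GCocone.IsColimit {D : GDiagram I C} (c : GCocone D) : Prop :=
  ∀ c' : GCocone D, ∃! f : c.pt ⟶ c'.pt, ∀ i, c.leg i ≫ f = c'.leg i

/-- The Van Kampen property of a cocone `c`: the functor `κ*`, given by pulling back
objects of the slice category over the apex along all the cocone legs, is an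
equivalence between the slice category and the category of cartesian natural
transformations into `D`.  (We phrase this as: there is an equivalence `F` which is,
objectwise and morphismwise, given by pullback along the legs.) -/
def GCocone.IsVanKampen {D : GDiagram I C} (c : GCocone D) : Prop :=
  ∃ (F : Over c.pt ⥤ CartObj D)
    (π : (σ : Over c.pt) → (i : I.V) → ((F.obj σ).diag.obj i ⟶ σ.left)),
    (∀ (σ : Over c.pt) (i : I.V),
        IsPullback (π σ i) ((F.obj σ).hom.app i) σ.hom (c.leg i)) ∧
    (∀ {σ σ' : Over c.pt} (γ : σ ⟶ σ') (i : I.V),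
        ((F.map γ).1.app i) ≫ π σ' i = π σ i ≫ γ.left) ∧
    F.IsEquivalence

end Core
section Paths

variable {B : Type u} [SmallCategory B] {I : MGraph.{u}}

/-- An element of some component of the diagram `D`, at sort `X`
(the components are regarded as disjoint, so each element is tagged with its index). -/
def Elt (D : GDiagram I (B ⥤ Type u)) (X : B) : Type u :=
  Σ i : I.V, (D.obj i).obj X

/-- A path segment of sort `X` in the diagram `D`: a triple `(y, δ, y')` with
`δ` an edge (`fwd`) or a formally reversed edge (`bwd`) of the shape graph. -/
inductive Seg (D : GDiagram I (B ⥤ Type u)) (X : B) : Type u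
  | fwd (d : I.E) (y : (D.obj (I.s d)).obj X)
  | bwd (d : I.E) (y : (D.obj (I.s d)).obj X)

namespace Seg

variable {D : GDiagram I (B ⥤ Type u)} {X : B}

/-- The first component of a path segment. -/
def src : Seg D X → Elt D X
  | fwd d y => ⟨I.s d, y⟩
  | bwd d y => ⟨I.t d, (D.map d).app X y⟩

/-- The third component of a path segment. -/
def tgt : Seg D X → Elt D X
  | fwd d y => ⟨I.t d, (D.map d).app X y⟩
  | bwd d y => ⟨I.s d, y⟩

/-- The reversed segment: `(y, δ, y') ↦ (y', δᵒᵖ, y)`. -/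
def rev : Seg D X → Seg D X
  | fwd d y => bwd d y
  | bwd d y => fwd d y

/-- Two segments are weakly equal if they are equal or each is the reverse of the other. -/
def WeaklyEq (a b : Seg D X) : Prop := a = b ∨ a = b.rev

end Seg

variable {D : GDiagram I (B ⥤ Type u)} {X : B}

/-- `p` is a mapping path of sort `X` connecting `z` with `z'`:  a finite sequence of
path segments in which consecutive segments share endpoints, starting at `z` and
ending at `z'`; the empty path connects each element with itself. -/
def IsMPath (p : List (Seg D X)) (z z' : Elt D X) : Prop :=
  p.Chain' (fun a b => a.tgt = b.src) ∧
  (p = [] → z = z') ∧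
  ∀ h : p ≠ [], (p.head h).src = z ∧ (p.getLast h).tgt = z'

/-- A mapping path is proper if no two distinct segments of it are weakly equal. -/
def ProperPath (p : List (Seg D X)) : Prop :=
  p.Pairwise (fun a b => ¬ Seg.WeaklyEq a b)

/-- Two mapping paths are disjoint if no segment of one is weakly equal to a segment
of the other. -/
def DisjointPaths (p q : List (Seg D X)) : Prop :=
  ∀ a ∈ p, ∀ b ∈ q, ¬ Seg.WeaklyEq a b

/-- A mapping path `p` starting at `z` is inner-cycle free if `yᵢ ≠ yⱼ` for all
`0 ≤ i < j ≤ n` with `j - i ≤ n - 1`, where `y₀ = z, y₁, …, yₙ` is the sequence of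
elements visited by the path. -/
def InnerCycleFree (p : List (Seg D X)) (z : Elt D X) : Prop :=
  ∀ (i j : ℕ), (_ : i < j) → (_ : j ≤ p.length) → j - i ≤ p.length - 1 →
    (z :: p.map Seg.tgt).get ⟨i, by simp only [List.length_cons, List.length_map]; omega⟩ ≠
    (z :: p.map Seg.tgt).get ⟨j, by simp only [List.length_cons, List.length_map]; omega⟩

end Paths
section GraphNotions

/-- The cyclic successor of `j : Fin n`. -/
def fcsucc {n : ℕ} (hn : 0 < n) (j : Fin n) : Fin n := ⟨(j.1 + 1) % n, Nat.mod_lt _ hn⟩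

/-- `IsEdgeSeq I l i j` : `l` is a sequence of edges of `I` leading from `i` to `j`. -/
def IsEdgeSeq (I : MGraph.{u}) : List I.E → I.V → I.V → Prop
  | [], i, j => i = j
  | e :: l, i, j => I.s e = i ∧ IsEdgeSeq I l (I.t e) j

/-- A vertex is minimal if it has no outgoing edges. -/
def MGraph.Minimal (I : MGraph.{u}) (i : I.V) : Prop := ∀ e : I.E, I.s e ≠ i

/-- A vertex is branching if it has at least two outgoing edges. -/
def MGraph.Branching (I : MGraph.{u}) (i : I.V) : Prop :=
  ∃ e e' : I.E, e ≠ e' ∧ I.s e = i ∧ I.s e' = i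

/-- A branch is a nonempty edge sequence from a branching vertex to a minimal vertex. -/
def IsBranch (I : MGraph.{u}) (p : List I.E) (i j : I.V) : Prop :=
  I.Branching i ∧ I.Minimal j ∧ p ≠ [] ∧ IsEdgeSeq I p i j

/-- A minimal vertex is affected if it is the target of some branch. -/
def MGraph.Affected (I : MGraph.{u}) (j : I.V) : Prop := ∃ p i, IsBranch I p i j

/-- A directed cycle: pairwise distinct edges `d₀, …, d_{n-1}` (`n ≥ 1`) with
`t(d_{k-1}) = s(d_{k mod n})`. -/
def MGraph.HasDirectedCycle (I : MGraph.{u}) : Prop :=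
  ∃ (n : ℕ) (hn : 1 ≤ n) (d : Fin n → I.E), Function.Injective d ∧
    ∀ k : Fin n, I.t (d k) = I.s (d (fcsucc (by omega) k))

/-- The set of endpoints of an edge. -/
def MGraph.ends (I : MGraph.{u}) (e : I.E) : Set I.V := {I.s e, I.t e}

/-- An undirected cycle: pairwise distinct edges `d₀, …, d_{n-1}` (`n ≥ 2`) such that
cyclically consecutive edges share an endpoint. -/
def IsUndirectedCycle (I : MGraph.{u}) {n : ℕ} (hn : 2 ≤ n) (d : Fin n → I.E) : Prop :=
  Function.Injective d ∧
    ∀ k : Fin n, (I.ends (d k) ∩ I.ends (d (fcsucc (by omega) k))).Nonempty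

variable {B : Type u} [SmallCategory B] {I : MGraph.{u}}

/-- `Evals D X l z w` : applying, at sort `X`, the composite of the maps `D_d` along
the edge sequence `l` to the element `z` yields the element `w`. -/
inductive Evals (D : GDiagram I (B ⥤ Type u)) (X : B) :
    List I.E → Elt D X → Elt D X → Prop
  | nil (z : Elt D X) : Evals D X [] z z
  | cons (e : I.E) (y : (D.obj (I.s e)).obj X) {l : List I.E} {w : Elt D X} :
      Evals D X l ⟨I.t e, (D.map e).app X y⟩ w → Evals D X (e :: l) ⟨I.s e, y⟩ w

/-- `D` is image-disjoint: for each pair of different branches `p, p'` starting at the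
same branching vertex `i` and every `y ∈ D_i(X)`, we have `D_p(y) ≠ D_{p'}(y)`. -/
def ImageDisjoint (D : GDiagram I (B ⥤ Type u)) : Prop :=
  ∀ (i j j' : I.V) (p p' : List I.E), IsBranch I p i j → IsBranch I p' i j' → p ≠ p' →
    ∀ (X : B) (y : (D.obj i).obj X) (w w' : Elt D X),
      Evals D X p ⟨i, y⟩ w → Evals D X p' ⟨i, y⟩ w' → w ≠ w'

end GraphNotions
section SpecializedColimit

variable {B : Type u} [SmallCategory B] {I : MGraph.{u}}

/-- The coproduct `∐_{i ∈ Min(I)} D_i` of the minimal components of `D`. -/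
def minCoprod (D : GDiagram I (B ⥤ Type u)) : B ⥤ Type u where
  obj X := Σ i : { i : I.V // I.Minimal i }, (D.obj i.1).obj X
  map f := TypeCat.ofHom fun z => ⟨z.1, (D.obj z.1.1).map f z.2⟩
  map_id X := by
    refine ConcreteCategory.hom_ext _ _ fun z => ?_; simp [FunctorToTypes.map_id_apply]
  map_comp f g := by
    refine ConcreteCategory.hom_ext _ _ fun z => ?_; simp [FunctorToTypes.map_comp_apply]

/-- A congruence on a presheaf `F`: a family of equivalence relations, one for each
sort, compatible with the action of the morphisms of `B`. -/
structure Congruence (F : B ⥤ Type u) where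
  rel : (X : B) → F.obj X → F.obj X → Prop
  iseqv : ∀ X, Equivalence (rel X)
  compat : ∀ {X Y : B} (f : X ⟶ Y) (a b : F.obj X), rel X a b → rel Y (F.map f a) (F.map f b)

/-- The sortwise quotient presheaf of a congruence. -/
def Congruence.quotient {F : B ⥤ Type u} (R : Congruence F) : B ⥤ Type u where
  obj X := Quot (R.rel X)
  map f := TypeCat.ofHom (Quot.map (F.map f) (fun a b h => R.compat f a b h))
  map_id X := by
    ext z
    induction z using Quot.ind with
    | _ a => simp [Quot.map, FunctorToTypes.map_id_apply]
  map_comp f g := by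
    ext z
    induction z using Quot.ind with
    | _ a => simp [Quot.map, FunctorToTypes.map_comp_apply]

/-- The primary identifications at sort `X`: for each pair of branches
`p = (i →^{e} ⋯ → j)`, `p' = (i →^{e'} ⋯ → j')` with common source `i` and `e ≠ e'`,
and each `y ∈ D_i(X)`, the pair `(⊆_j(D_p(y)), ⊆_{j'}(D_{p'}(y)))`. -/
def PrimaryRel (D : GDiagram I (B ⥤ Type u)) (X : B)
    (a b : (minCoprod D).obj X) : Prop :=
  ∃ (i j j' : I.V) (hj : I.Minimal j) (hj' : I.Minimal j')
    (e e' : I.E) (l l' : List I.E),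
    e ≠ e' ∧ IsBranch I (e :: l) i j ∧ IsBranch I (e' :: l') i j' ∧
    ∃ (y : (D.obj i).obj X) (z : (D.obj j).obj X) (z' : (D.obj j').obj X),
      Evals D X (e :: l) ⟨i, y⟩ ⟨j, z⟩ ∧ Evals D X (e' :: l') ⟨i, y⟩ ⟨j', z'⟩ ∧
      a = ⟨⟨j, hj⟩, z⟩ ∧ b = ⟨⟨j', hj'⟩, z'⟩

end SpecializedColimit


section AuxGraph

set_option linter.unreachableTactic false
set_option linter.unusedTactic false

variable {I : MGraph.{u}}

lemma isEdgeSeq_append : ∀ (l1 : List I.E) {l2 : List I.E} {i j : I.V},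
    IsEdgeSeq I (l1 ++ l2) i j → ∃ m, IsEdgeSeq I l1 i m ∧ IsEdgeSeq I l2 m j := by
  intro l1
  induction l1 with
  | nil => intro l2 i j h; exact ⟨i, rfl, h⟩
  | cons e l ih =>
    intro l2 i j h
    obtain ⟨m, h1, h2⟩ := ih h.2
    exact ⟨m, ⟨h.1, h1⟩, h2⟩

lemma isEdgeSeq_src : ∀ {l : List I.E} {i j : I.V}, IsEdgeSeq I l i j →
    ∀ h : 0 < l.length, I.s (l.get ⟨0, h⟩) = i := by
  intro l i j h hl
  cases l with
  | nil => simp at hl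
  | cons e l => exact h.1

lemma isEdgeSeq_consec : ∀ (l : List I.E) {i j : I.V}, IsEdgeSeq I l i j →
    ∀ (k : ℕ) (h : k + 1 < l.length),
      I.t (l.get ⟨k, by omega⟩) = I.s (l.get ⟨k + 1, h⟩) := by
  intro l
  induction l with
  | nil => intro i j _ k h; simp at h
  | cons e l ih =>
    intro i j hseq k h
    cases k with
    | zero =>
      have h0 : 0 < l.length := by simpa using h
      exact (isEdgeSeq_src hseq.2 h0).symm ▸ rfl
    | succ k => exact ih hseq.2 k (by simpa using h)

lemma isEdgeSeq_last : ∀ (l : List I.E) {i j : I.V}, IsEdgeSeq I l i j →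
    ∀ _ : 0 < l.length, I.t (l.get ⟨l.length - 1, by omega⟩) = j := by
  intro l
  induction l with
  | nil => intro i j _ h; simp at h
  | cons e l ih =>
    intro i j hseq h
    cases l with
    | nil => exact hseq.2
    | cons e' l' =>
      have := ih hseq.2 (by simp)
      simpa using this

lemma cycle_of_closed_walk : ∀ (n : ℕ) (l : List I.E), l.length ≤ n → l ≠ [] →
    ∀ i, IsEdgeSeq I l i i → I.HasDirectedCycle := by
  intro n
  induction n with
  | zero =>
    intro l hl hne
    have : l = [] := List.length_eq_zero_iff.mp (Nat.le_zero.mp hl)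
    exact absurd this hne
  | succ n ih =>
    intro l hl hne i hseq
    by_cases hnd : l.Nodup
    · have hpos : 0 < l.length := List.length_pos_iff.mpr hne
      refine ⟨l.length, hpos, l.get, List.nodup_iff_injective_get.mp hnd, ?_⟩
      intro k
      by_cases hk : k.1 + 1 < l.length
      · have : fcsucc (by omega) k = ⟨k.1 + 1, hk⟩ := by
          simp [fcsucc, Nat.mod_eq_of_lt hk]
        rw [this]
        exact isEdgeSeq_consec l hseq k.1 hk
      · have hk1 : k.1 + 1 = l.length := by omega
        have hsu : fcsucc (by omega) k = ⟨0, hpos⟩ := by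
          simp [fcsucc, hk1]
        have hke : k = ⟨l.length - 1, by omega⟩ := by
          apply Fin.ext; simp; omega
        rw [hsu, isEdgeSeq_src hseq hpos, hke]
        exact isEdgeSeq_last l hseq hpos
    · rw [List.nodup_iff_injective_get] at hnd
      simp only [Function.Injective] at hnd
      push_neg at hnd
      obtain ⟨a, b, hab, hne'⟩ := hnd
      wlog hlt : a < b generalizing a b
      · exact this b a hab.symm hne'.symm (by omega)
      have hbl : b.1 < l.length := b.2
      have hal : a.1 < b.1 := hlt
      have hdd : (l.drop a.1).drop (b.1 - a.1) = l.drop b.1 := by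
        rw [List.drop_drop]; congr 1; omega
      have hdec2 : l.drop a.1 = (l.drop a.1).take (b.1 - a.1) ++ l.drop b.1 := by
        conv_lhs => rw [← List.take_append_drop (b.1 - a.1) (l.drop a.1)]
        rw [hdd]
      have hdec : l = l.take a.1 ++ ((l.drop a.1).take (b.1 - a.1) ++ l.drop b.1) := by
        conv_lhs => rw [← List.take_append_drop a.1 l]
        rw [← hdec2]
      set l2 := (l.drop a.1).take (b.1 - a.1) with hl2
      have hlen2 : l2.length = b.1 - a.1 := by
        simp only [hl2, List.length_take, List.length_drop]; omega
      have hseq' := hdec ▸ hseq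
      obtain ⟨m, h1, h23⟩ := isEdgeSeq_append _ hseq'
      obtain ⟨m', h2, h3⟩ := isEdgeSeq_append _ h23
      have hpos2 : 0 < l2.length := by omega
      have hposb : 0 < (l.drop b.1).length := by simp only [List.length_drop]; omega
      have hm : I.s (l2.get ⟨0, hpos2⟩) = m := isEdgeSeq_src h2 hpos2
      have hm' : I.s ((l.drop b.1).get ⟨0, hposb⟩) = m' := isEdgeSeq_src h3 hposb
      have e2 : l2.get ⟨0, hpos2⟩ = l.get a := by
        simp only [hl2, List.get_eq_getElem, List.getElem_take, List.getElem_drop]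
        all_goals congr 1 <;> omega
      have eb : (l.drop b.1).get ⟨0, hposb⟩ = l.get b := by
        simp only [List.get_eq_getElem, List.getElem_drop]
        all_goals congr 1 <;> omega
      have hmm : m = m' := by
        rw [← hm, ← hm', e2, eb, hab]
      subst hmm
      exact ih l2 (by omega) (List.length_pos_iff.mp hpos2) m h2

/-- One-step relation: `estep j i` iff there is an edge from `i` to `j`. -/
def MGraph.estep (I : MGraph.{u}) (j i : I.V) : Prop := ∃ e : I.E, I.s e = i ∧ I.t e = j

lemma walk_of_transGen {j i : I.V} (h : Relation.TransGen I.estep j i) :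
    ∃ l : List I.E, l ≠ [] ∧ IsEdgeSeq I l i j := by
  induction h with
  | single h =>
    obtain ⟨e, hs, ht⟩ := h
    exact ⟨[e], by simp, hs, ht ▸ rfl⟩
  | tail _ h ih =>
    obtain ⟨e, hs, ht⟩ := h
    obtain ⟨l, hne, hseq⟩ := ih
    exact ⟨e :: l, by simp, hs, ht ▸ hseq⟩

lemma estep_wf [Finite I.V] [Finite I.E] (hnc : ¬ I.HasDirectedCycle) :
    WellFounded I.estep := by
  have hirr : ∀ i : I.V, ¬ Relation.TransGen I.estep i i := by
    intro i h
    obtain ⟨l, hne, hseq⟩ := walk_of_transGen h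
    exact hnc (cycle_of_closed_walk l.length l le_rfl hne i hseq)
  haveI : IsIrrefl I.V (Relation.TransGen I.estep) := ⟨hirr⟩
  exact Subrelation.wf (fun h => Relation.TransGen.single h)
    (Finite.wellFounded_of_trans_of_irrefl _)

lemma exists_path_to_minimal [Finite I.V] [Finite I.E] (hnc : ¬ I.HasDirectedCycle)
    (i : I.V) : ∃ j, I.Minimal j ∧ ∃ p, IsEdgeSeq I p i j := by
  induction i using (estep_wf hnc).induction with
  | _ i ih =>
    by_cases hmin : I.Minimal i
    · exact ⟨i, hmin, [], rfl⟩
    · simp only [MGraph.Minimal, not_forall, not_not] at hmin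
      obtain ⟨e, he⟩ := hmin
      obtain ⟨j, hj, p, hp⟩ := ih (I.t e) ⟨e, he, rfl⟩
      exact ⟨j, hj, e :: p, he, hp⟩

end AuxGraph

section AuxEvals

variable {B : Type u} [SmallCategory B] {I : MGraph.{u}}
variable {D : GDiagram I (B ⥤ Type u)} {X : B}

lemma elt_snd_eq {i : I.V} {a b : (D.obj i).obj X} (h : (⟨i, a⟩ : Elt D X) = ⟨i, b⟩) :
    a = b := by simpa using h

lemma evals_isEdgeSeq {l : List I.E} {z w : Elt D X} (h : Evals D X l z w) :
    IsEdgeSeq I l z.1 w.1 := by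
  induction h with
  | nil => rfl
  | cons e y h ih => exact ⟨rfl, ih⟩

lemma evals_nil_inv {z w : Elt D X} (h : Evals D X [] z w) : z = w := by cases h; rfl

lemma evals_cons_inv {e : I.E} {l : List I.E} {z w : Elt D X} (h : Evals D X (e :: l) z w) :
    ∃ y : (D.obj (I.s e)).obj X, z = ⟨I.s e, y⟩ ∧
      Evals D X l ⟨I.t e, (D.map e).app X y⟩ w := by
  cases h with
  | cons e y h => exact ⟨y, rfl, h⟩

lemma evals_det {l : List I.E} : ∀ {z w w' : Elt D X},
    Evals D X l z w → Evals D X l z w' → w = w' := by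
  induction l with
  | nil => intro z w w' h h'; rw [← evals_nil_inv h, ← evals_nil_inv h']
  | cons e l ih =>
    intro z w w' h h'
    obtain ⟨y, rfl, h1⟩ := evals_cons_inv h
    obtain ⟨y', hz, h2⟩ := evals_cons_inv h'
    have : y = y' := elt_snd_eq hz
    subst this
    exact ih h1 h2

lemma evals_exists {l : List I.E} {i j : I.V} (h : IsEdgeSeq I l i j)
    (y : (D.obj i).obj X) : ∃ z, Evals D X l ⟨i, y⟩ ⟨j, z⟩ := by
  induction l generalizing i with
  | nil =>
    have h' : i = j := h
    subst h'
    exact ⟨y, Evals.nil _⟩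
  | cons e l ih =>
    obtain ⟨hs, hseq⟩ := h
    subst hs
    obtain ⟨z, hz⟩ := ih hseq ((D.map e).app X y)
    exact ⟨z, Evals.cons e y hz⟩

lemma evals_map {X Y : B} (f : X ⟶ Y) {l : List I.E} {z w : Elt D X}
    (h : Evals D X l z w) :
    Evals D Y l ⟨z.1, (D.obj z.1).map f z.2⟩ ⟨w.1, (D.obj w.1).map f w.2⟩ := by
  induction h with
  | nil z => exact Evals.nil _
  | cons e y h ih =>
    refine Evals.cons e ((D.obj (I.s e)).map f y) ?_
    have hnat : (D.map e).app Y ((D.obj (I.s e)).map f y)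
        = (D.obj (I.t e)).map f ((D.map e).app X y) :=
      FunctorToTypes.naturality (D.map e) f y
    rw [hnat]
    exact ih

lemma key_welldef [Finite I.V] [Finite I.E] (hnc : ¬ I.HasDirectedCycle)
    (R : Congruence (minCoprod D)) (hR : ∀ X a b, PrimaryRel D X a b → R.rel X a b) :
    ∀ (i : I.V) (X : B) (y : (D.obj i).obj X) (p p' : List I.E) (j j' : I.V)
      (hj : I.Minimal j) (hj' : I.Minimal j')
      (z : (D.obj j).obj X) (z' : (D.obj j').obj X),
      Evals D X p ⟨i, y⟩ ⟨j, z⟩ → Evals D X p' ⟨i, y⟩ ⟨j', z'⟩ →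
      R.rel X ⟨⟨j, hj⟩, z⟩ ⟨⟨j', hj'⟩, z'⟩ := by
  intro i
  induction i using (estep_wf hnc).induction with
  | _ i IH =>
  intro X y p p' j j' hj hj' z z' h h'
  cases p with
  | nil =>
    have hz : (⟨i, y⟩ : Elt D X) = ⟨j, z⟩ := evals_nil_inv h
    have hij : i = j := congrArg Sigma.fst hz
    subst hij
    have hyz : y = z := elt_snd_eq hz
    subst hyz
    cases p' with
    | nil =>
      have hz' : (⟨i, y⟩ : Elt D X) = ⟨j', z'⟩ := evals_nil_inv h'
      have hij' : i = j' := congrArg Sigma.fst hz'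
      subst hij'
      have hyz' : y = z' := elt_snd_eq hz'
      subst hyz'
      exact (R.iseqv X).refl _
    | cons e' l' =>
      obtain ⟨y1, hz1, -⟩ := evals_cons_inv h'
      exact absurd (congrArg Sigma.fst hz1).symm (hj e')
  | cons e l =>
    obtain ⟨y0, hz0, htail⟩ := evals_cons_inv h
    have hfst : i = I.s e := congrArg Sigma.fst hz0
    subst hfst
    have hy0 : y = y0 := elt_snd_eq hz0
    subst hy0
    cases p' with
    | nil =>
      have hz' : (⟨I.s e, y⟩ : Elt D X) = ⟨j', z'⟩ := evals_nil_inv h'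
      exact absurd (congrArg Sigma.fst hz') (hj' e)
    | cons e' l' =>
      by_cases hee : e = e'
      · subst hee
        obtain ⟨y1, hz1, htail'⟩ := evals_cons_inv h'
        have hy1 : y = y1 := elt_snd_eq hz1
        subst hy1
        exact IH (I.t e) ⟨e, rfl, rfl⟩ X ((D.map e).app X y) l l' j j' hj hj' z z'
          htail htail'
      · have hseq : IsEdgeSeq I (e :: l) (I.s e) j := evals_isEdgeSeq h
        have hseq' : IsEdgeSeq I (e' :: l') (I.s e) j' := evals_isEdgeSeq h'
        have hbr : I.Branching (I.s e) := ⟨e, e', hee, rfl, hseq'.1⟩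
        exact hR X _ _ ⟨I.s e, j, j', hj, hj', e, e', l, l', hee,
          ⟨hbr, hj, by simp, hseq⟩, ⟨hbr, hj', by simp, hseq'⟩,
          y, z, z', h, h', rfl, rfl⟩

end AuxEvals

/-- **The specialized construction of colimits** (Sect. 6.3).  Let `I` be a finite
directed multigraph without directed cycles and `D : I → Set^B` a diagram.  Let `≅`
be the smallest congruence on `∐_{i∈Min(I)} D_i` containing all primary
identifications.  Then the family `κ` with `κ_i = [-]_≅ ∘ ⊆_i` for minimal `i` and
`κ_i = κ_j ∘ D_p` for any edge sequence `p` from `i` to a minimal `j` is well defined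
(independent of the choice of `p`) and is a colimiting cocone
`D ⇒ Δ((∐_{i∈Min(I)} D_i)/≅)`. -/
theorem specialized_colimit_construction
    {B : Type u} [SmallCategory B] {I : MGraph.{u}} [Finite I.V] [Finite I.E]
    (hnc : ¬ I.HasDirectedCycle)
    (D : GDiagram I (B ⥤ Type u))
    (R : Congruence (minCoprod D))
    (hR : ∀ X a b, PrimaryRel D X a b → R.rel X a b)
    (hRsmall : ∀ R' : Congruence (minCoprod D),
      (∀ X a b, PrimaryRel D X a b → R'.rel X a b) →
      ∀ X a b, R.rel X a b → R'.rel X a b) :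
    ∃ (leg : (i : I.V) → (D.obj i ⟶ R.quotient))
      (hcomm : ∀ e : I.E, D.map e ≫ leg (I.t e) = leg (I.s e)),
      (∀ (i : I.V) (hi : I.Minimal i) (X : B) (y : (D.obj i).obj X),
          (leg i).app X y = Quot.mk (R.rel X) ⟨⟨i, hi⟩, y⟩) ∧
      (∀ (i j : I.V) (hj : I.Minimal j) (p : List I.E), IsEdgeSeq I p i j →
          ∀ (X : B) (y : (D.obj i).obj X) (z : (D.obj j).obj X),
            Evals D X p ⟨i, y⟩ ⟨j, z⟩ →
            (leg i).app X y = Quot.mk (R.rel X) ⟨⟨j, hj⟩, z⟩) ∧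
      GCocone.IsColimit { pt := R.quotient, leg := leg, comm := hcomm } := by
  classical
  choose jv hjv pv hpv using fun i => exists_path_to_minimal hnc i
  have hev0 : ∀ (i : I.V) (X : B) (y : (D.obj i).obj X),
      ∃ z, Evals D X (pv i) ⟨i, y⟩ ⟨jv i, z⟩ := fun i X y => evals_exists (hpv i) y
  choose ev hev using hev0
  have hnat : ∀ (i : I.V) {X Y : B} (f : X ⟶ Y) (y : (D.obj i).obj X),
      ev i Y ((D.obj i).map f y) = (D.obj (jv i)).map f (ev i X y) := by
    intro i X Y f y
    have h1 := evals_map f (hev i X y)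
    have h2 := hev i Y ((D.obj i).map f y)
    exact elt_snd_eq (evals_det h2 h1)
  have hpath : ∀ (i j : I.V) (hj : I.Minimal j) (p : List I.E) (X : B)
      (y : (D.obj i).obj X) (z : (D.obj j).obj X), Evals D X p ⟨i, y⟩ ⟨j, z⟩ →
      Quot.mk (R.rel X) ⟨⟨jv i, hjv i⟩, ev i X y⟩ = Quot.mk (R.rel X) ⟨⟨j, hj⟩, z⟩ :=
    fun i j hj p X y z h => Quot.sound
      (key_welldef hnc R hR i X y (pv i) p _ _ (hjv i) hj _ _ (hev i X y) h)
  refine ⟨fun i =>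
    { app := fun X => TypeCat.ofHom fun y => Quot.mk (R.rel X) ⟨⟨jv i, hjv i⟩, ev i X y⟩
      naturality := by
        intro X Y f
        ext y
        show Quot.mk (R.rel Y) ⟨⟨jv i, hjv i⟩, ev i Y ((D.obj i).map f y)⟩ = _
        rw [hnat i f y]
        rfl }, ?_, ?_, ?_, ?_⟩
  · -- commutation
    intro e
    apply NatTrans.ext
    funext X; ext y
    show Quot.mk (R.rel X) ⟨⟨jv (I.t e), hjv (I.t e)⟩, ev (I.t e) X ((D.map e).app X y)⟩
      = Quot.mk (R.rel X) ⟨⟨jv (I.s e), hjv (I.s e)⟩, ev (I.s e) X y⟩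
    exact Quot.sound (key_welldef hnc R hR (I.s e) X y (e :: pv (I.t e)) (pv (I.s e))
      _ _ (hjv _) (hjv _) _ _
      (Evals.cons e y (hev (I.t e) X ((D.map e).app X y))) (hev (I.s e) X y))
  · -- legs on minimal components
    intro i hi X y
    exact hpath i i hi [] X y y (Evals.nil _)
  · -- legs via arbitrary paths
    intro i j hj p _ X y z h
    exact hpath i j hj p X y z h
  · -- colimit property
    intro c'
    have hdn : ∀ {X Y : B} (f : X ⟶ Y) (a : (minCoprod D).obj X),
        (c'.leg ((minCoprod D).map f a).1.1).app Y ((minCoprod D).map f a).2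
          = c'.pt.map f ((c'.leg a.1.1).app X a.2) := by
      intro X Y f a
      exact FunctorToTypes.naturality (c'.leg a.1.1) f a.2
    have hev_leg : ∀ {X : B} {l : List I.E} {z w : Elt D X}, Evals D X l z w →
        (c'.leg w.1).app X w.2 = (c'.leg z.1).app X z.2 := by
      intro X l z w h
      induction h with
      | nil => rfl
      | cons e y h ih =>
        rw [ih]
        have h2 := ConcreteCategory.congr_hom (NatTrans.congr_app (c'.comm e) X) y
        simpa using h2
    have hR' : ∀ X a b, PrimaryRel D X a b →
        (c'.leg a.1.1).app X a.2 = (c'.leg b.1.1).app X b.2 := by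
      rintro X a b ⟨i, j, j', hj, hj', e, e', l, l', hne, hb, hb', y, z, z', hv, hv', ha, hb2⟩
      subst ha; subst hb2
      exact (hev_leg hv).trans (hev_leg hv').symm
    have hlift : ∀ X (a b : (minCoprod D).obj X), R.rel X a b →
        (c'.leg a.1.1).app X a.2 = (c'.leg b.1.1).app X b.2 :=
      hRsmall { rel := fun X a b => (c'.leg a.1.1).app X a.2 = (c'.leg b.1.1).app X b.2
                iseqv := fun X => ⟨fun _ => rfl, Eq.symm, Eq.trans⟩
                compat := fun f a b h => by
                  show (c'.leg _).app _ _ = (c'.leg _).app _ _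
                  rw [hdn f a, hdn f b, h] } hR'
    refine ⟨{ app := fun X => TypeCat.ofHom (Quot.lift (fun a => (c'.leg a.1.1).app X a.2) (hlift X))
              naturality := by
                intro X Y f
                ext q
                induction q using Quot.ind with
                | _ a => exact hdn f a }, ?_, ?_⟩
    · intro i
      apply NatTrans.ext
      funext X; ext y
      show (c'.leg (jv i)).app X (ev i X y) = (c'.leg i).app X y
      exact hev_leg (hev i X y)
    · intro g hg
      apply NatTrans.ext
      funext X; ext q
      induction q using Quot.ind with
      | _ a =>
        obtain ⟨⟨j, hj⟩, z⟩ := a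
        have hmk : Quot.mk (R.rel X) ⟨⟨jv j, hjv j⟩, ev j X z⟩
            = Quot.mk (R.rel X) ⟨⟨j, hj⟩, z⟩ := hpath j j hj [] X z z (Evals.nil _)
        have hgj := ConcreteCategory.congr_hom (NatTrans.congr_app (hg j) X) z
        simp only [FunctorToTypes.comp] at hgj
        calc g.app X (Quot.mk (R.rel X) ⟨⟨j, hj⟩, z⟩)
            = g.app X (Quot.mk (R.rel X) ⟨⟨jv j, hjv j⟩, ev j X z⟩) := by rw [hmk]
          _ = (c'.leg j).app X z := hgj
          _ = (c'.leg (jv j)).app X (ev j X z) := (hev_leg (hev j X z)).symm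
          _ = _ := (congrArg (Quot.lift (fun a => (c'.leg a.1.1).app X a.2) (hlift X)) hmk)
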